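/- Let N > M ≥ 1 be coprime integers, α ∈ ℂ, let τ : ℤ → ℂ satisfy τ_m ≠ 0 for all m, and let β' : ℤ → ℂ satisfy β'_{m+N} = β'_m for all m. If τ satisfies the bilinear equation τ_{m+2M+N} τ_m = β'_m τ_{m+N+M} τ_{m+M} + α τ_{m+2M} τ_{m+N} for all m ∈ ℤ, then the sequence v_m := (τ_m τ_{m+N+M})/(τ_{m+M} τ_{m+N}) satisfies the (N,M) travelling-wave reduction of the lattice KdV equation, v_{m+N+M} − v_m = α(1/v_{m+N} − 1/v_{m+M}), for all m ∈ ℤ. -/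

import Mathlib

/-- If a nowhere-vanishing `τ : ℤ → ℂ` satisfies the bilinear equation
`τ_{m+2M+N} τ_m = β'_m τ_{m+N+M} τ_{m+M} + α τ_{m+2M} τ_{m+N}` with `β'` periodic of period `N`,
then `v_m = (τ_m τ_{m+N+M})/(τ_{m+M} τ_{m+N})` satisfies the `(N,M)` travelling-wave
reduction of the lattice KdV equation. -/
theorem bilinear_second_implies_kdvReduction
    (N M : ℕ) (hM : 1 ≤ M) (hMN : M < N) (hcop : Nat.Coprime N M) (α : ℂ)
    (τ : ℤ → ℂ) (hτ : ∀ m : ℤ, τ m ≠ 0)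
    (β' : ℤ → ℂ) (hβ' : ∀ m : ℤ, β' (m + N) = β' m)
    (hbil : ∀ m : ℤ, τ (m + 2 * M + N) * τ m =
        β' m * (τ (m + N + M) * τ (m + M)) + α * (τ (m + 2 * M) * τ (m + N)))
    (v : ℤ → ℂ)
    (hv : ∀ m : ℤ, v m = τ m * τ (m + N + M) / (τ (m + M) * τ (m + N))) :
    ∀ m : ℤ, v (m + N + M) - v m = α * (1 / v (m + N) - 1 / v (m + M)) := by
  intro m
  have h1 := hbil m
  have h2 := hbil (m + N)
  rw [hβ'] at h2
  have e1 : m + (N : ℤ) + M + M = m + 2 * M + N := by ring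
  have e2 : m + (N : ℤ) + M + N = m + 2 * N + M := by ring
  have e3 : m + (N : ℤ) + M + N + M = m + 2 * N + 2 * M := by ring
  have e4 : m + (N : ℤ) + N + M = m + 2 * N + M := by ring
  have e5 : m + (N : ℤ) + N = m + 2 * N := by ring
  have e6 : m + (M : ℤ) + N + M = m + 2 * M + N := by ring
  have e7 : m + (M : ℤ) + M = m + 2 * M := by ring
  have e8 : m + (M : ℤ) + N = m + N + M := by ring
  have f1 : m + (N : ℤ) + 2 * M + N = m + 2 * N + 2 * M := by ring
  have f2 : m + (N : ℤ) + 2 * M = m + 2 * M + N := by ring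
  rw [f1, f2] at h2
  rw [hv (m + N + M), hv m, hv (m + N), hv (m + M), e3, e1, e2, e4, e5, e6, e7, e8]
  have hB := hτ (m + M)
  have hC := hτ (m + N)
  have hD := hτ (m + N + M)
  have hE := hτ (m + 2 * M)
  have hF := hτ (m + 2 * N)
  have hG := hτ (m + 2 * M + N)
  have hI := hτ (m + 2 * N + M)
  rw [e4, e5] at h2
  field_simp
  linear_combination
    (τ (m + M)) * h2 -
    (τ (m + 2 * N + M)) * h1
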